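/- Assume 0 < |⟦γ⟧| < σ and set a = |⟦γ⟧|/σ and z_a = arcsin(a). Let C ∈ (1,∞) be the unique constant with √(σ/(2g)) ∫₀^{z_a} cos(ψ)·(C − cos(ψ))^{−1/2} dψ = ℓ, and define Ξ : [−z_a, z_a] → ℝ by Ξ(z) = √(σ/(2g)) ∫₀^{z} cos(ψ)·(C − cos(ψ))^{−1/2} dψ. Then Ξ is odd, strictly increasing, and a bijection from [−z_a, z_a] onto [−ℓ, ℓ], and the function χ : [−ℓ,ℓ] → ℝ defined by χ(x) = sgn(⟦γ⟧)·√(2σ/g)·√(C − cos(Ξ^{−1}(x))) is infinitely differentiable on [−ℓ,ℓ], is an even function, and is the unique twice continuously differentiable solution of the equilibrium capillary problem with pressure P = 0, i.e. g·χ − σ·𝓗(χ) = 0 on (−ℓ,ℓ) and χ'(±ℓ)/√(1+χ'(±ℓ)²) = ±⟦γ⟧/σ. -/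

import Mathlib

open Set MeasureTheory
open Filter Topology


/-- One-sided derivative of a function regarded as a function on `[-ℓ, ℓ]`. -/
noncomputable def capD (ℓ : ℝ) (ζ : ℝ → ℝ) : ℝ → ℝ :=
  derivWithin ζ (Set.Icc (-ℓ) ℓ)

/-- The mean curvature operator `𝓗(ζ) = (ζ'/√(1+(ζ')²))'` on `[-ℓ, ℓ]`. -/
noncomputable def meanCurv (ℓ : ℝ) (ζ : ℝ → ℝ) : ℝ → ℝ :=
  derivWithin (fun x => capD ℓ ζ x / Real.sqrt (1 + (capD ℓ ζ x) ^ 2)) (Set.Icc (-ℓ) ℓ)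

/-- `ζ` is a twice continuously differentiable solution of the equilibrium capillary
problem on `[-ℓ, ℓ]` with pressure `P`. -/
def IsCapSol (g σ ℓ γ P : ℝ) (ζ : ℝ → ℝ) : Prop :=
  ContDiffOn ℝ 2 ζ (Set.Icc (-ℓ) ℓ) ∧
  (∀ x ∈ Set.Ioo (-ℓ) ℓ, g * ζ x - σ * meanCurv ℓ ζ x = P) ∧
  σ * capD ℓ ζ ℓ / Real.sqrt (1 + (capD ℓ ζ ℓ) ^ 2) = γ ∧
  σ * capD ℓ ζ (-ℓ) / Real.sqrt (1 + (capD ℓ ζ (-ℓ)) ^ 2) = -γ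

/-- The capillary energy functional `𝓘`, expressed in terms of a function `ζ`
and its derivative `ζ'`. -/
noncomputable def capEnergy (g σ ℓ γ : ℝ) (ζ ζ' : ℝ → ℝ) : ℝ :=
  (∫ x in (-ℓ)..ℓ, (g / 2 * ζ x ^ 2 + σ * Real.sqrt (1 + ζ' x ^ 2))) -
    γ * (ζ ℓ + ζ (-ℓ))

/-- `ψ ∈ W^{1,1}((-ℓ,ℓ))` with weak derivative `ψ'`. -/
def IsW11 (ℓ : ℝ) (ψ ψ' : ℝ → ℝ) : Prop :=
  MeasureTheory.IntegrableOn ψ' (Set.Ioo (-ℓ) ℓ) ∧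
  ∀ x ∈ Set.Icc (-ℓ) ℓ, ψ x = ψ (-ℓ) + ∫ t in (-ℓ)..x, ψ' t


noncomputable abbrev sm : WithTop ℕ∞ := ((⊤ : ℕ∞) : WithTop ℕ∞)

lemma one_le_sm : 1 ≤ sm := by
  rw [show (1 : WithTop ℕ∞) = ((1 : ℕ∞) : WithTop ℕ∞) from rfl]
  exact_mod_cast le_top

lemma two_le_sm : 2 ≤ sm := by
  rw [show (2 : WithTop ℕ∞) = ((2 : ℕ∞) : WithTop ℕ∞) from rfl]
  exact_mod_cast le_top

lemma sub_cos_pos {C : ℝ} (hC : 1 < C) (z : ℝ) : 0 < C - Real.cos z := by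
  nlinarith [Real.cos_le_one z]

lemma sqrt_sub_cos_pos {C : ℝ} (hC : 1 < C) (z : ℝ) : 0 < Real.sqrt (C - Real.cos z) :=
  Real.sqrt_pos.2 (sub_cos_pos hC z)

lemma capf_contDiff {C : ℝ} (hC : 1 < C) :
    ContDiff ℝ sm (fun z => Real.cos z / Real.sqrt (C - Real.cos z)) := by
  rw [contDiff_iff_contDiffAt]
  intro z
  exact Real.contDiff_cos.contDiffAt.div
    (((contDiff_const.sub Real.contDiff_cos).contDiffAt).sqrt (sub_cos_pos hC z).ne')
    (sqrt_sub_cos_pos hC z).ne'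

lemma capF_contDiff {C c : ℝ} (hC : 1 < C) :
    ContDiff ℝ sm (fun w => c * Real.sqrt (C - Real.cos w)) := by
  rw [contDiff_iff_contDiffAt]
  intro z
  exact contDiff_const.contDiffAt.mul
    (((contDiff_const.sub Real.contDiff_cos).contDiffAt).sqrt (sub_cos_pos hC z).ne')

lemma capF_hasDerivAt {C c : ℝ} (hC : 1 < C) (w : ℝ) :
    HasDerivAt (fun w => c * Real.sqrt (C - Real.cos w))
      (c * (Real.sin w / (2 * Real.sqrt (C - Real.cos w)))) w := by
  have hu : HasDerivAt (fun w => C - Real.cos w) (Real.sin w) w := by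
    simpa using (Real.hasDerivAt_cos w).const_sub C
  have h := ((Real.hasDerivAt_sqrt (sub_cos_pos hC w).ne').comp w hu).const_mul c
  refine h.congr_deriv ?_
  ring

lemma capf_cont {C : ℝ} (hC : 1 < C) :
    Continuous (fun z => Real.cos z / Real.sqrt (C - Real.cos z)) :=
  (capf_contDiff hC).continuous

lemma capXi_hasDerivAt {C k : ℝ} (hC : 1 < C) (z : ℝ) :
    HasDerivAt (fun z => k * ∫ ψ in (0:ℝ)..z, Real.cos ψ / Real.sqrt (C - Real.cos ψ))
      (k * (Real.cos z / Real.sqrt (C - Real.cos z))) z := by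
  have h := intervalIntegral.integral_hasDerivAt_right
    ((capf_cont hC).intervalIntegrable 0 z)
    ((capf_cont hC).stronglyMeasurableAtFilter _ _)
    (capf_cont hC).continuousAt
  exact h.const_mul k

lemma capXi_contDiff {C k : ℝ} (hC : 1 < C) :
    ContDiff ℝ sm (fun z => k * ∫ ψ in (0:ℝ)..z, Real.cos ψ / Real.sqrt (C - Real.cos ψ)) := by
  rw [show sm = ((⊤:ℕ∞) : WithTop ℕ∞) from rfl, contDiff_infty_iff_deriv]
  constructor
  · exact fun z => (capXi_hasDerivAt hC z).differentiableAt
  · have : deriv (fun z => k * ∫ ψ in (0:ℝ)..z, Real.cos ψ / Real.sqrt (C - Real.cos ψ))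
        = fun z => k * (Real.cos z / Real.sqrt (C - Real.cos z)) :=
      funext fun z => (capXi_hasDerivAt hC z).deriv
    rw [this]
    exact contDiff_const.mul (capf_contDiff hC)

/-- Generic smooth local inverse for 1D maps. -/
lemma local_inv {f : ℝ → ℝ} {z d : ℝ} (hf : ContDiffAt ℝ sm f z)
    (hd : HasDerivAt f d z) (hd0 : d ≠ 0) :
    ∃ L : ℝ → ℝ, ContDiffAt ℝ sm L (f z) ∧ L (f z) = z ∧
      (∀ᶠ y in 𝓝 (f z), f (L y) = y) ∧ HasDerivAt L d⁻¹ (f z) := by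
  set e := (ContinuousLinearEquiv.unitsEquivAut ℝ) (Units.mk0 d hd0) with he
  have hfd : HasFDerivAt f (e : ℝ →L[ℝ] ℝ) z := hd.hasFDerivAt_equiv hd0
  refine ⟨hf.localInverse hfd (by simp [sm]), hf.to_localInverse hfd (by simp [sm]),
    hf.localInverse_apply_image hfd (by simp [sm]), ?_, ?_⟩
  · exact (hf.hasStrictFDerivAt' hfd (by simp [sm])).eventually_right_inverse
  · have hs : HasStrictDerivAt f d z := by
      have := hf.hasStrictDerivAt (by simp [sm])
      rwa [hd.deriv] at this
    exact (hs.to_local_left_inverse hd0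
      (hf.hasStrictFDerivAt' hfd (by simp [sm])).eventually_left_inverse).hasDerivAt

lemma one_add_sq_pos (t : ℝ) : 0 < 1 + t ^ 2 := by positivity

lemma fcap_hasDerivAt (t : ℝ) :
    HasDerivAt (fun t : ℝ => t / Real.sqrt (1 + t ^ 2))
      (1 / ((1 + t ^ 2) * Real.sqrt (1 + t ^ 2))) t := by
  have hu : HasDerivAt (fun t : ℝ => 1 + t ^ 2) (2 * t) t := by
    simpa using ((hasDerivAt_pow 2 t).const_add 1)
  have hs : HasDerivAt (fun t : ℝ => Real.sqrt (1 + t ^ 2))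
      (2 * t / (2 * Real.sqrt (1 + t ^ 2))) t :=
    (Real.hasDerivAt_sqrt (one_add_sq_pos t).ne').comp t hu |>.congr_deriv (by ring)
  have h := (hasDerivAt_id t).div hs (Real.sqrt_pos.2 (one_add_sq_pos t)).ne'
  refine h.congr_deriv ?_
  have h1 : Real.sqrt (1 + t ^ 2) ^ 2 = 1 + t ^ 2 := Real.sq_sqrt (one_add_sq_pos t).le
  have h2 : Real.sqrt (1 + t ^ 2) ≠ 0 := (Real.sqrt_pos.2 (one_add_sq_pos t)).ne'
  simp only [id_eq]
  field_simp
  linear_combination t ^ 2 * h1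

lemma fcap_strictMono : StrictMono (fun t : ℝ => t / Real.sqrt (1 + t ^ 2)) := by
  apply strictMono_of_deriv_pos
  intro t
  rw [(fcap_hasDerivAt t).deriv]
  positivity

lemma fcap_mono_mul {a b : ℝ} :
    0 ≤ (a / Real.sqrt (1 + a ^ 2) - b / Real.sqrt (1 + b ^ 2)) * (a - b) := by
  rcases le_total a b with h | h
  · have := fcap_strictMono.monotone h
    nlinarith
  · have := fcap_strictMono.monotone h
    nlinarith

lemma tan_form {z s : ℝ} (hz : 0 < Real.cos z) (hs : s ^ 2 = 1) :
    s * Real.tan z / Real.sqrt (1 + (s * Real.tan z) ^ 2) = s * Real.sin z := by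
  have h1 : 1 + (s * Real.tan z) ^ 2 = (1 / Real.cos z) ^ 2 := by
    rw [mul_pow, hs, one_mul, Real.tan_eq_sin_div_cos, div_pow, div_pow, one_pow]
    field_simp
    exact Real.cos_sq_add_sin_sq z
  rw [h1, Real.sqrt_sq (by positivity), Real.tan_eq_sin_div_cos]
  field_simp

lemma cancel_lemma {g σ a b : ℝ} (hg : 0 < g) (hσ : 0 < σ) (hb : 0 ≤ b)
    (h : g * a ^ 2 + σ * b = 0) : a = 0 := by
  have h5 : a ^ 2 = 0 := le_antisymm (by nlinarith) (sq_nonneg a)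
  exact pow_eq_zero_iff (by norm_num) |>.1 h5

/-- Construction of the zero-pressure equilibrium capillary surface
`χ` via the parametrization `Ξ`. -/
theorem stmt3 (g σ ℓ γ : ℝ) (hg : 0 < g) (hσ : 0 < σ) (hℓ : 0 < ℓ)
    (hγ0 : γ ≠ 0) (hγ : |γ| < σ)
    (C : ℝ) (hC : 1 < C)
    (hCeq : Real.sqrt (σ / (2 * g)) *
      (∫ ψ in (0 : ℝ)..(Real.arcsin (|γ| / σ)),
        Real.cos ψ / Real.sqrt (C - Real.cos ψ)) = ℓ) :
    let za : ℝ := Real.arcsin (|γ| / σ)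
    let Ξ : ℝ → ℝ := fun z =>
      Real.sqrt (σ / (2 * g)) *
        ∫ ψ in (0 : ℝ)..z, Real.cos ψ / Real.sqrt (C - Real.cos ψ)
    let χ : ℝ → ℝ := fun x =>
      Real.sign γ * Real.sqrt (2 * σ / g) *
        Real.sqrt (C - Real.cos (Function.invFunOn Ξ (Set.Icc (-za) za) x))
    (∀ z ∈ Set.Icc (-za) za, Ξ (-z) = -Ξ z) ∧
    StrictMonoOn Ξ (Set.Icc (-za) za) ∧
    Set.BijOn Ξ (Set.Icc (-za) za) (Set.Icc (-ℓ) ℓ) ∧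
    ContDiffOn ℝ ((⊤ : ℕ∞) : WithTop ℕ∞) χ (Set.Icc (-ℓ) ℓ) ∧
    (∀ x ∈ Set.Icc (-ℓ) ℓ, χ (-x) = χ x) ∧
    IsCapSol g σ ℓ γ 0 χ ∧
    (∀ ζ : ℝ → ℝ, IsCapSol g σ ℓ γ 0 ζ → Set.EqOn ζ χ (Set.Icc (-ℓ) ℓ)) := by
  intro za Ξ χ
  set s : ℝ := Real.sign γ with hsdef
  set k : ℝ := Real.sqrt (σ / (2 * g)) with hkdef
  set G : ℝ → ℝ := Function.invFunOn Ξ (Set.Icc (-za) za) with hGdef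
  set f : ℝ → ℝ := fun z => Real.cos z / Real.sqrt (C - Real.cos z) with hfdef
  -- basic numerology
  have hk : 0 < k := Real.sqrt_pos.2 (by positivity)
  have hk2 : k ^ 2 = σ / (2 * g) := Real.sq_sqrt (by positivity)
  have h2k : Real.sqrt (2 * σ / g) = 2 * k := by
    rw [hkdef, show (2:ℝ)*σ/g = 4 * (σ/(2*g)) by field_simp; ring, show (4:ℝ) = 2^2 by norm_num,
      Real.sqrt_mul (by positivity), Real.sqrt_sq (by norm_num)]
  have hs2 : s ^ 2 = 1 := by
    rcases hγ0.lt_or_gt with h | h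
    · rw [hsdef, Real.sign_of_neg h]; norm_num
    · rw [hsdef, Real.sign_of_pos h]; norm_num
  have hsabs : s * |γ| = γ := by
    rcases hγ0.lt_or_gt with h | h
    · rw [hsdef, Real.sign_of_neg h, abs_of_neg h]; ring
    · rw [hsdef, Real.sign_of_pos h, abs_of_pos h]; ring
  have haσ : |γ| / σ < 1 := (div_lt_one hσ).2 hγ
  have haσ0 : 0 < |γ| / σ := by positivity
  have hza0 : 0 < za := Real.arcsin_pos.2 haσ0
  have hzaπ : za < Real.pi / 2 := Real.arcsin_lt_pi_div_two.2 haσ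
  have hsinza : Real.sin za = |γ| / σ := Real.sin_arcsin (by linarith [abs_nonneg γ]) haσ.le
  set zb : ℝ := (za + Real.pi / 2) / 2 with hzbdef
  have hzazb : za < zb := by rw [hzbdef]; linarith
  have hzbπ : zb < Real.pi / 2 := by rw [hzbdef]; linarith
  have hzb0 : 0 < zb := by linarith
  have hcos_pos : ∀ z ∈ Set.Icc (-zb) zb, 0 < Real.cos z := fun z hz =>
    Real.cos_pos_of_mem_Ioo ⟨by linarith [hz.1], by linarith [hz.2]⟩
  have hSzb : Set.Icc (-za) za ⊆ Set.Ioo (-zb) zb := fun z hz =>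
    ⟨by linarith [hz.1], by linarith [hz.2]⟩
  have hsub_pos : ∀ z : ℝ, 0 < C - Real.cos z := sub_cos_pos hC
  have hsqrt_pos : ∀ z : ℝ, 0 < Real.sqrt (C - Real.cos z) := sqrt_sub_cos_pos hC
  -- analytic facts about Ξ
  have hfc : Continuous f := capf_cont hC
  have hXi_d : ∀ z : ℝ, HasDerivAt Ξ (k * f z) z := fun z => capXi_hasDerivAt hC z
  have hXiC : ContDiff ℝ sm Ξ := capXi_contDiff hC
  have hodd : ∀ z : ℝ, Ξ (-z) = -Ξ z := by
    intro z
    have he : ∀ ψ, f (-ψ) = f ψ := fun ψ => by rw [hfdef]; simp [Real.cos_neg]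
    have h2 := intervalIntegral.integral_comp_neg (a := (0:ℝ)) (b := -z) f
    simp only [he, neg_neg, neg_zero] at h2
    show k * (∫ ψ in (0:ℝ)..(-z), f ψ) = -(k * ∫ ψ in (0:ℝ)..z, f ψ)
    rw [h2, intervalIntegral.integral_symm]
    ring
  have hmono2 : StrictMonoOn Ξ (Set.Icc (-zb) zb) := by
    apply strictMonoOn_of_deriv_pos (convex_Icc _ _) hXiC.continuous.continuousOn
    intro z hz
    rw [interior_Icc] at hz
    rw [(hXi_d z).deriv]
    exact mul_pos hk (div_pos (hcos_pos z (Set.Ioo_subset_Icc_self hz)) (hsqrt_pos z))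
  have hmono : StrictMonoOn Ξ (Set.Icc (-za) za) :=
    hmono2.mono (fun z hz => Set.Ioo_subset_Icc_self (hSzb hz))
  have hXiza : Ξ za = ℓ := hCeq
  have hXinza : Ξ (-za) = -ℓ := by rw [hodd, hXiza]
  have hbij : Set.BijOn Ξ (Set.Icc (-za) za) (Set.Icc (-ℓ) ℓ) := by
    refine ⟨?_, hmono.injOn, ?_⟩
    · intro z hz
      have hza_mem : -za ∈ Set.Icc (-za) za := Set.left_mem_Icc.2 (by linarith)
      have hza_mem' : za ∈ Set.Icc (-za) za := Set.right_mem_Icc.2 (by linarith)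
      constructor
      · rw [← hXinza]; exact hmono.monotoneOn hza_mem hz hz.1
      · rw [← hXiza]; exact hmono.monotoneOn hz hza_mem' hz.2
    · intro x hx
      have h := intermediate_value_Icc (show -za ≤ za by linarith)
        hXiC.continuous.continuousOn
      rw [hXiza, hXinza] at h
      exact h hx
  -- facts about G
  have hGmem : ∀ x ∈ Set.Icc (-ℓ) ℓ, G x ∈ Set.Icc (-za) za ∧ Ξ (G x) = x := by
    intro x hx
    obtain ⟨z, hz, hzx⟩ := hbij.surjOn hx
    exact ⟨Function.invFunOn_mem ⟨z, hz, hzx⟩, Function.invFunOn_eq ⟨z, hz, hzx⟩⟩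
  have hGXi : ∀ z ∈ Set.Icc (-za) za, G (Ξ z) = z := fun z hz =>
    hbij.injOn.leftInvOn_invFunOn hz
  have hGl : G ℓ = za := by rw [← hXiza]; exact hGXi za (Set.right_mem_Icc.2 (by linarith))
  have hGnl : G (-ℓ) = -za := by
    rw [← hXinza]; exact hGXi (-za) (Set.left_mem_Icc.2 (by linarith))
  have hGodd : ∀ x ∈ Set.Icc (-ℓ) ℓ, G (-x) = -G x := by
    intro x hx
    obtain ⟨hmem, hval⟩ := hGmem x hx
    have h1 : Ξ (-(G x)) = -x := by rw [hodd, hval]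
    have h2 : -(G x) ∈ Set.Icc (-za) za := ⟨by linarith [hmem.2], by linarith [hmem.1]⟩
    rw [← h1, hGXi _ h2]
  have hGcos : ∀ x ∈ Set.Icc (-ℓ) ℓ, 0 < Real.cos (G x) := fun x hx =>
    hcos_pos _ (Set.Ioo_subset_Icc_self (hSzb (hGmem x hx).1))
  -- the local inverse engine
  have key : ∀ x₀ ∈ Set.Icc (-ℓ) ℓ, ∃ L : ℝ → ℝ, ContDiffAt ℝ sm L x₀ ∧ L x₀ = G x₀ ∧
      (∀ᶠ y in 𝓝[Set.Icc (-ℓ) ℓ] x₀, G y = L y) ∧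
      HasDerivAt L (k * f (G x₀))⁻¹ x₀ := by
    intro x₀ hx₀
    obtain ⟨hz₀S, hz₀x⟩ := hGmem x₀ hx₀
    have hd0 : k * f (G x₀) ≠ 0 := by
      have : 0 < f (G x₀) := div_pos (hGcos x₀ hx₀) (hsqrt_pos _)
      positivity
    obtain ⟨L, hL1, hL2, hL3, hL4⟩ := local_inv hXiC.contDiffAt (hXi_d (G x₀)) hd0
    rw [hz₀x] at hL1 hL2 hL3 hL4
    refine ⟨L, hL1, hL2, ?_, hL4⟩
    have hopen : ∀ᶠ y in 𝓝 x₀, L y ∈ Set.Ioo (-zb) zb :=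
      hL1.continuousAt.eventually_mem (isOpen_Ioo.mem_nhds (by rw [hL2]; exact hSzb hz₀S))
    have hev := (hopen.and hL3).filter_mono (nhdsWithin_le_nhds (s := Set.Icc (-ℓ) ℓ))
    filter_upwards [hev, self_mem_nhdsWithin] with y hy hyI
    obtain ⟨hmem, hval⟩ := hGmem y hyI
    exact hmono2.injOn (Set.Ioo_subset_Icc_self (hSzb hmem))
      (Set.Ioo_subset_Icc_self hy.1) (by rw [hval, hy.2])
  -- χ as a composition
  set F : ℝ → ℝ := fun w => (s * Real.sqrt (2*σ/g)) * Real.sqrt (C - Real.cos w) with hFdef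
  have hχF : ∀ x, χ x = F (G x) := fun x => by rw [hFdef]
  have hFsm : ContDiff ℝ sm F := capF_contDiff hC
  have hFd : ∀ w, HasDerivAt F
      ((s * Real.sqrt (2*σ/g)) * (Real.sin w / (2 * Real.sqrt (C - Real.cos w)))) w :=
    fun w => capF_hasDerivAt hC w
  -- derivative of χ
  have hcapD : ∀ x₀ ∈ Set.Icc (-ℓ) ℓ, capD ℓ χ x₀ = s * Real.tan (G x₀) := by
    intro x₀ hx₀
    obtain ⟨L, hLC, hLx, hLev, hLd⟩ := key x₀ hx₀
    have hχL : χ =ᶠ[𝓝[Set.Icc (-ℓ) ℓ] x₀] F ∘ L :=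
      hLev.mono (fun y hy => by rw [hχF, hy]; rfl)
    have hχx : χ x₀ = (F ∘ L) x₀ := by rw [hχF, Function.comp_apply, hLx]
    have hFL : HasDerivAt (F ∘ L)
        ((s * Real.sqrt (2*σ/g)) * (Real.sin (G x₀) / (2 * Real.sqrt (C - Real.cos (G x₀)))) *
          (k * f (G x₀))⁻¹) x₀ := by
      have := (hFd (L x₀)).comp x₀ hLd
      rwa [hLx] at this
    show derivWithin χ (Set.Icc (-ℓ) ℓ) x₀ = _
    rw [hχL.derivWithin_eq hχx,
      hFL.differentiableAt.derivWithin ((uniqueDiffOn_Icc (by linarith)) x₀ hx₀),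
      hFL.deriv, h2k, hfdef, Real.tan_eq_sin_div_cos]
    have h1 := hGcos x₀ hx₀
    have h2 := hsqrt_pos (G x₀)
    field_simp
  -- smoothness of χ
  have hsmooth : ContDiffOn ℝ sm χ (Set.Icc (-ℓ) ℓ) := by
    intro x₀ hx₀
    obtain ⟨L, hLC, hLx, hLev, hLd⟩ := key x₀ hx₀
    have hχL : χ =ᶠ[𝓝[Set.Icc (-ℓ) ℓ] x₀] F ∘ L :=
      hLev.mono (fun y hy => by rw [hχF, hy]; rfl)
    have hχx : χ x₀ = (F ∘ L) x₀ := by rw [hχF, Function.comp_apply, hLx]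
    exact ((hFsm.contDiffAt.comp x₀ hLC).contDiffWithinAt).congr_of_eventuallyEq hχL hχx
  -- mean curvature of χ
  have hmean : ∀ x₀ ∈ Set.Icc (-ℓ) ℓ,
      meanCurv ℓ χ x₀ = s * Real.sqrt (C - Real.cos (G x₀)) / k := by
    intro x₀ hx₀
    obtain ⟨L, hLC, hLx, hLev, hLd⟩ := key x₀ hx₀
    have hWeq : Set.EqOn (fun x => capD ℓ χ x / Real.sqrt (1 + capD ℓ χ x ^ 2))
        (fun x => s * Real.sin (G x)) (Set.Icc (-ℓ) ℓ) := by
      intro x hx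
      simp only
      rw [hcapD x hx]
      exact tan_form (hGcos x hx) hs2
    have hev2 : (fun x => s * Real.sin (G x)) =ᶠ[𝓝[Set.Icc (-ℓ) ℓ] x₀]
        (fun x => s * Real.sin (L x)) := hLev.mono (fun y hy => by simp only; rw [hy])
    have hd : HasDerivAt (fun x => s * Real.sin (L x))
        (s * (Real.cos (G x₀) * (k * f (G x₀))⁻¹)) x₀ := by
      have := ((Real.hasDerivAt_sin (L x₀)).comp x₀ hLd).const_mul s
      rw [hLx] at this
      exact this
    show derivWithin (fun x => capD ℓ χ x / Real.sqrt (1 + capD ℓ χ x ^ 2))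
      (Set.Icc (-ℓ) ℓ) x₀ = _
    rw [derivWithin_congr hWeq (hWeq hx₀), hev2.derivWithin_eq (by rw [hLx]),
      hd.differentiableAt.derivWithin ((uniqueDiffOn_Icc (by linarith)) x₀ hx₀), hd.deriv,
      hfdef]
    have h1 := hGcos x₀ hx₀
    have h2 := hsqrt_pos (G x₀)
    field_simp
  -- boundary value computation
  have hbl : σ * (s * Real.tan za) / Real.sqrt (1 + (s * Real.tan za) ^ 2) = γ := by
    have hcza : 0 < Real.cos za := hcos_pos za ⟨by linarith, by linarith⟩
    rw [mul_div_assoc, tan_form hcza hs2, hsinza]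
    field_simp
    linarith [hsabs]
  have hsol : IsCapSol g σ ℓ γ 0 χ := by
    refine ⟨hsmooth.of_le two_le_sm, ?_, ?_, ?_⟩
    · intro x hx
      have hxI := Set.Ioo_subset_Icc_self hx
      rw [hmean x hxI, hχF, hFdef, h2k]
      have h2gk : 2 * g * k ^ 2 = σ := by rw [hk2]; field_simp
      have h2 := hsqrt_pos (G x)
      field_simp
      linear_combination (s * Real.sqrt (C - Real.cos (G x))) * h2gk
    · rw [hcapD ℓ (Set.right_mem_Icc.2 (by linarith)), hGl]
      exact hbl
    · have h3 : s * Real.tan (-za) = -(s * Real.tan za) := by rw [Real.tan_neg]; ring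
      rw [hcapD (-ℓ) (Set.left_mem_Icc.2 (by linarith)), hGnl, h3, neg_sq, ← hbl]
      ring
  refine ⟨fun z _ => hodd z, hmono, hbij, hsmooth, ?_, hsol, ?_⟩
  · intro x hx
    show s * Real.sqrt (2*σ/g) * Real.sqrt (C - Real.cos (G (-x))) = _
    rw [hGodd x hx, Real.cos_neg]
  · -- uniqueness
    intro ζ hζ
    obtain ⟨hζC2, hζpde, hζbr, hζbl⟩ := hζ
    obtain ⟨hχC2, hχpde, hχbr, hχbl⟩ := hsol
    have hll : -ℓ < ℓ := by linarith
    have hUD : UniqueDiffOn ℝ (Set.Icc (-ℓ) ℓ) := uniqueDiffOn_Icc hll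
    have facts : ∀ η : ℝ → ℝ, ContDiffOn ℝ 2 η (Set.Icc (-ℓ) ℓ) →
        (∀ x ∈ Set.Ioo (-ℓ) ℓ, g * η x - σ * meanCurv ℓ η x = 0) →
        ContinuousOn η (Set.Icc (-ℓ) ℓ) ∧
        ContinuousOn (capD ℓ η) (Set.Icc (-ℓ) ℓ) ∧
        (∀ x ∈ Set.Ioo (-ℓ) ℓ, HasDerivAt η (capD ℓ η x) x) ∧
        (∀ x ∈ Set.Ioo (-ℓ) ℓ, HasDerivAt
          (fun y => capD ℓ η y / Real.sqrt (1 + capD ℓ η y ^ 2)) (g / σ * η x) x) := by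
      intro η hC2 hpde
      have hcont : ContinuousOn η (Set.Icc (-ℓ) ℓ) := hC2.continuousOn
      have hD1 : ContDiffOn ℝ 1 (capD ℓ η) (Set.Icc (-ℓ) ℓ) :=
        hC2.derivWithin hUD (by norm_num)
      have hDcont : ContinuousOn (capD ℓ η) (Set.Icc (-ℓ) ℓ) := hD1.continuousOn
      have hDdw : ∀ x ∈ Set.Icc (-ℓ) ℓ, DifferentiableWithinAt ℝ (capD ℓ η)
          (Set.Icc (-ℓ) ℓ) x := fun x hx => (hD1.differentiableOn one_ne_zero) x hx
      have hηd : ∀ x ∈ Set.Ioo (-ℓ) ℓ, HasDerivAt η (capD ℓ η x) x := by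
        intro x hx
        have hnb : Set.Icc (-ℓ) ℓ ∈ 𝓝 x := Icc_mem_nhds hx.1 hx.2
        have h1 : DifferentiableWithinAt ℝ η (Set.Icc (-ℓ) ℓ) x :=
          (hC2.differentiableOn (by norm_num)) x (Set.Ioo_subset_Icc_self hx)
        have h2 := h1.differentiableAt hnb
        show HasDerivAt η (derivWithin η (Set.Icc (-ℓ) ℓ) x) x
        rw [derivWithin_of_mem_nhds hnb]
        exact h2.hasDerivAt
      refine ⟨hcont, hDcont, hηd, ?_⟩
      intro x hx
      have hnb : Set.Icc (-ℓ) ℓ ∈ 𝓝 x := Icc_mem_nhds hx.1 hx.2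
      have hxI := Set.Ioo_subset_Icc_self hx
      have hq : ∀ y : ℝ, (0:ℝ) < 1 + capD ℓ η y ^ 2 := fun y => by positivity
      have hAdw : DifferentiableWithinAt ℝ
          (fun y => capD ℓ η y / Real.sqrt (1 + capD ℓ η y ^ 2)) (Set.Icc (-ℓ) ℓ) x := by
        refine (hDdw x hxI).div ?_ (Real.sqrt_pos.2 (hq x)).ne'
        exact ((differentiableWithinAt_const 1).add ((hDdw x hxI).pow 2)).sqrt (hq x).ne'
      have hAda : DifferentiableAt ℝ
          (fun y => capD ℓ η y / Real.sqrt (1 + capD ℓ η y ^ 2)) x := hAdw.differentiableAt hnb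
      have hval : deriv (fun y => capD ℓ η y / Real.sqrt (1 + capD ℓ η y ^ 2)) x
          = g / σ * η x := by
        have h0 := hpde x hx
        have h1 : meanCurv ℓ η x = g / σ * η x := by
          have hσ' : σ ≠ 0 := hσ.ne'
          field_simp at h0 ⊢
          linarith
        rw [← h1]
        show _ = derivWithin (fun y => capD ℓ η y / Real.sqrt (1 + capD ℓ η y ^ 2))
          (Set.Icc (-ℓ) ℓ) x
        rw [derivWithin_of_mem_nhds hnb]
      rw [← hval]
      exact hAda.hasDerivAt
    obtain ⟨hζcont, hζDcont, hζd, hζAd⟩ := facts ζ hζC2 hζpde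
    obtain ⟨hχcont, hχDcont, hχd, hχAd⟩ := facts χ hχC2 hχpde
    set Aζ : ℝ → ℝ := fun y => capD ℓ ζ y / Real.sqrt (1 + capD ℓ ζ y ^ 2) with hAζdef
    set Aχ : ℝ → ℝ := fun y => capD ℓ χ y / Real.sqrt (1 + capD ℓ χ y ^ 2) with hAχdef
    set hfun : ℝ → ℝ := fun x => σ * ((Aζ x - Aχ x) * (ζ x - χ x)) with hhdef
    set Hfun : ℝ → ℝ := fun x => g * (ζ x - χ x) ^ 2 +
      σ * ((Aζ x - Aχ x) * (capD ℓ ζ x - capD ℓ χ x)) with hHdef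
    have hq : ∀ (D : ℝ → ℝ) (y : ℝ), (0:ℝ) < 1 + D y ^ 2 := fun D y => by positivity
    have hAζcont : ContinuousOn Aζ (Set.Icc (-ℓ) ℓ) := by
      refine hζDcont.div ?_ (fun y _ => (Real.sqrt_pos.2 (hq _ y)).ne')
      exact (continuousOn_const.add (hζDcont.pow 2)).sqrt
    have hAχcont : ContinuousOn Aχ (Set.Icc (-ℓ) ℓ) := by
      refine hχDcont.div ?_ (fun y _ => (Real.sqrt_pos.2 (hq _ y)).ne')
      exact (continuousOn_const.add (hχDcont.pow 2)).sqrt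
    have hhcont : ContinuousOn hfun (Set.Icc (-ℓ) ℓ) :=
      continuousOn_const.mul ((hAζcont.sub hAχcont).mul (hζcont.sub hχcont))
    have hHcont : ContinuousOn Hfun (Set.Icc (-ℓ) ℓ) :=
      (continuousOn_const.mul ((hζcont.sub hχcont).pow 2)).add
        (continuousOn_const.mul ((hAζcont.sub hAχcont).mul (hζDcont.sub hχDcont)))
    have hhd : ∀ x ∈ Set.Ioo (-ℓ) ℓ, HasDerivWithinAt hfun (Hfun x) (Set.Ioi x) x := by
      intro x hx
      have hder := (((hζAd x hx).sub (hχAd x hx)).mul ((hζd x hx).sub (hχd x hx))).const_mul σ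
      have : Hfun x = σ * ((g / σ * ζ x - g / σ * χ x) * (ζ x - χ x) +
          (Aζ x - Aχ x) * (capD ℓ ζ x - capD ℓ χ x)) := by
        rw [hHdef]
        have hσ' : σ ≠ 0 := hσ.ne'
        field_simp
      rw [this]
      exact hder.hasDerivWithinAt
    have hHint : IntervalIntegrable Hfun volume (-ℓ) ℓ := by
      apply ContinuousOn.intervalIntegrable
      rwa [Set.uIcc_of_le hll.le]
    have hint : ∫ x in (-ℓ)..ℓ, Hfun x = hfun ℓ - hfun (-ℓ) :=
      intervalIntegral.integral_eq_sub_of_hasDeriv_right_of_le hll.le hhcont hhd hHint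
    have hAeq : ∀ (η : ℝ → ℝ) (c x : ℝ), σ * capD ℓ η x / Real.sqrt (1 + capD ℓ η x ^ 2) = c →
        capD ℓ η x / Real.sqrt (1 + capD ℓ η x ^ 2) = c / σ := by
      intro η c x hc
      rw [← hc]
      field_simp
    have hhl : hfun ℓ = 0 := by
      rw [hhdef]
      simp only
      rw [hAζdef, hAχdef]
      simp only
      rw [hAeq ζ γ ℓ hζbr, hAeq χ γ ℓ hχbr]
      ring
    have hhnl : hfun (-ℓ) = 0 := by
      rw [hhdef]
      simp only
      rw [hAζdef, hAχdef]
      simp only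
      rw [hAeq ζ (-γ) (-ℓ) hζbl, hAeq χ (-γ) (-ℓ) hχbl]
      ring
    have hint0 : ∫ x in (-ℓ)..ℓ, Hfun x = 0 := by rw [hint, hhl, hhnl]; ring
    have hHnn : ∀ x ∈ Set.Icc (-ℓ) ℓ, 0 ≤ Hfun x := by
      intro x hx
      have h1 : 0 ≤ (Aζ x - Aχ x) * (capD ℓ ζ x - capD ℓ χ x) := fcap_mono_mul
      have h2 : 0 ≤ (ζ x - χ x) ^ 2 := sq_nonneg _
      rw [hHdef]
      have := mul_nonneg hσ.le h1
      have := mul_nonneg hg.le h2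
      simp only
      linarith
    have hH0 : ∀ x ∈ Set.Ioo (-ℓ) ℓ, Hfun x = 0 := by
      by_contra hcon
      push_neg at hcon
      obtain ⟨x₀, hx₀, hne⟩ := hcon
      have hpos : 0 < Hfun x₀ :=
        lt_of_le_of_ne (hHnn x₀ (Set.Ioo_subset_Icc_self hx₀)) (Ne.symm hne)
      have hca : ContinuousAt Hfun x₀ :=
        (hHcont x₀ (Set.Ioo_subset_Icc_self hx₀)).continuousAt (Icc_mem_nhds hx₀.1 hx₀.2)
      have hev : ∀ᶠ y in 𝓝 x₀, Hfun y ∈ Set.Ioi (Hfun x₀ / 2) :=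
        hca.eventually_mem (isOpen_Ioi.mem_nhds (by simp; linarith))
      have hev2 : ∀ᶠ y in 𝓝 x₀, y ∈ Set.Ioo (-ℓ) ℓ :=
        eventually_of_mem (isOpen_Ioo.mem_nhds hx₀) (fun y hy => hy)
      obtain ⟨ε, hε, hball⟩ := Metric.eventually_nhds_iff_ball.1 (hev.and hev2)
      have hIoc : IntegrableOn Hfun (Set.Ioc (-ℓ) ℓ) volume :=
        (intervalIntegrable_iff_integrableOn_Ioc_of_le hll.le).1 hHint
      have h0 : ∫ x in Set.Ioc (-ℓ) ℓ, Hfun x = 0 := by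
        rw [← intervalIntegral.integral_of_le hll.le]
        exact hint0
      have hae : Hfun =ᵐ[volume.restrict (Set.Ioc (-ℓ) ℓ)] 0 := by
        refine (MeasureTheory.integral_eq_zero_iff_of_nonneg_ae ?_ hIoc).1 h0
        refine (ae_restrict_iff' measurableSet_Ioc).2 (Filter.Eventually.of_forall ?_)
        intro y hy
        exact hHnn y ⟨hy.1.le, hy.2⟩
      have hnull : volume.restrict (Set.Ioc (-ℓ) ℓ) {y | Hfun y ≠ 0} = 0 := by
        have h' := hae
        rw [Filter.EventuallyEq, MeasureTheory.ae_iff] at h'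
        simpa using h'
      have hsub : Metric.ball x₀ ε ⊆ {y | Hfun y ≠ 0} := by
        intro y hy
        have h' := (hball y hy).1
        simp only [Set.mem_Ioi] at h'
        simp only [Set.mem_setOf_eq]
        have hhalf : (0:ℝ) < Hfun x₀ / 2 := half_pos hpos
        intro h
        rw [h] at h'
        exact absurd h' (not_lt.2 hhalf.le)
      have hz : volume.restrict (Set.Ioc (-ℓ) ℓ) (Metric.ball x₀ ε) = 0 :=
        measure_mono_null hsub hnull
      rw [MeasureTheory.Measure.restrict_apply measurableSet_ball] at hz
      have hbs : Metric.ball x₀ ε ∩ Set.Ioc (-ℓ) ℓ = Metric.ball x₀ ε := by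
        apply Set.inter_eq_self_of_subset_left
        intro y hy
        have := (hball y hy).2
        exact ⟨this.1, this.2.le⟩
      rw [hbs, Real.volume_ball] at hz
      have : (0:ℝ) < 2 * ε := by linarith
      simp [ENNReal.ofReal_eq_zero] at hz
      linarith
    have heqIoo : ∀ x ∈ Set.Ioo (-ℓ) ℓ, ζ x = χ x := by
      intro x hx
      have h1 := hH0 x hx
      have h3 : Hfun x = g * (ζ x - χ x) ^ 2 +
          σ * ((Aζ x - Aχ x) * (capD ℓ ζ x - capD ℓ χ x)) := rfl
      rw [h3] at h1
      have h2 : 0 ≤ (Aζ x - Aχ x) * (capD ℓ ζ x - capD ℓ χ x) := fcap_mono_mul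
      have h4 := cancel_lemma hg hσ h2 h1
      linarith
    intro x hx
    have hcl : x ∈ closure (Set.Ioo (-ℓ) ℓ) := by
      rw [closure_Ioo hll.ne]
      exact hx
    have hne : (𝓝[Set.Ioo (-ℓ) ℓ] x).NeBot := mem_closure_iff_nhdsWithin_neBot.1 hcl
    have ht1 : Tendsto ζ (𝓝[Set.Ioo (-ℓ) ℓ] x) (𝓝 (ζ x)) :=
      (hζcont x hx).mono Set.Ioo_subset_Icc_self
    have ht2 : Tendsto χ (𝓝[Set.Ioo (-ℓ) ℓ] x) (𝓝 (χ x)) :=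
      (hχcont x hx).mono Set.Ioo_subset_Icc_self
    have hev : ζ =ᶠ[𝓝[Set.Ioo (-ℓ) ℓ] x] χ :=
      eventually_of_mem self_mem_nhdsWithin (fun y hy => heqIoo y hy)
    exact tendsto_nhds_unique (ht1.congr' hev) ht2
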